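/- Under projection consistency (Σ_{e∈E^{−m}} P^{m,e} 𝟙ᵉ = Σ_{e∈E^{+m}} P^{m,e} 𝟙ᵉ = 𝟙^m), stiffness consistency (S_jᵉ 𝟙ᵉ = 0), and the discrete divergence theorem, the semi-discrete scheme conserves total momentum: Σ_{e∈E} (𝟙ᵉ)ᵀ M_ρᵉ dv_iᵉ/dt = 0, where the velocity equation is M_ρᵉ dv_iᵉ/dt = −(S_jᵉ)ᵀ σ_{ij}ᵉ + Σ_{m∈Mᵉ} (P^{m,e})ᵀ W^m T_i^{*m[e]} and T_i^{*m[e]} equals ±T_i^{*m} according as e is on the minus/plus side of m, with every mortar having at least one element on each side (periodic domain). -/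

import Mathlib

open Matrix BigOperators


private lemma dot_sum_left {ι k : Type} [Fintype k] (s : Finset ι)
    (f : ι → k → ℝ) (v : k → ℝ) :
    (∑ x ∈ s, f x) ⬝ᵥ v = ∑ x ∈ s, f x ⬝ᵥ v := by
  simp only [dotProduct, Finset.sum_apply, Finset.sum_mul]
  exact Finset.sum_comm

private lemma dot_sum_right {ι k : Type} [Fintype k] (s : Finset ι)
    (f : ι → k → ℝ) (v : k → ℝ) :
    v ⬝ᵥ (∑ x ∈ s, f x) = ∑ x ∈ s, v ⬝ᵥ f x := by
  simp only [dotProduct, Finset.sum_apply, Finset.mul_sum]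
  exact Finset.sum_comm

theorem momentum_conservation
    {E M : Type} [Fintype E] [Fintype M] [DecidableEq E] [DecidableEq M]
    (n : E → ℕ) (nm : M → ℕ)
    (oneE : (e : E) → Fin (n e) → ℝ) (oneM : (m : M) → Fin (nm m) → ℝ)
    (S : (e : E) → Fin 3 → Matrix (Fin (n e)) (Fin (n e)) ℝ)
    (P : (m : M) → (e : E) → Matrix (Fin (nm m)) (Fin (n e)) ℝ)
    (W : (m : M) → Matrix (Fin (nm m)) (Fin (nm m)) ℝ)
    (nvec : (m : M) → Fin 3 → Fin (nm m) → ℝ)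
    (Eminus Eplus : M → Finset E)
    (hdisj : ∀ m, Disjoint (Eminus m) (Eplus m))
    (hne : ∀ m, (Eminus m).Nonempty ∧ (Eplus m).Nonempty)
    (Me : E → Finset M)
    (hMe : ∀ e m, m ∈ Me e ↔ e ∈ Eminus m ∨ e ∈ Eplus m)
    (hproj : ∀ m, (∑ e ∈ Eminus m, P m e *ᵥ oneE e) = oneM m ∧
                  (∑ e ∈ Eplus m, P m e *ᵥ oneE e) = oneM m)
    (hstiff : ∀ e j, S e j *ᵥ oneE e = 0)
    (hdiv : ∀ e j, (S e j)ᵀ *ᵥ oneE e =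
      ∑ m ∈ Me e, (P m e)ᵀ *ᵥ (W m *ᵥ
        (if e ∈ Eminus m then nvec m j else -(nvec m j))))
    (Mρ : (e : E) → Matrix (Fin (n e)) (Fin (n e)) ℝ)
    (σ : (e : E) → Fin 3 → Fin 3 → Fin (n e) → ℝ)
    (Tstar : (m : M) → Fin 3 → Fin (nm m) → ℝ)
    (dv : (e : E) → Fin 3 → Fin (n e) → ℝ)
    (hscheme : ∀ e i, Mρ e *ᵥ dv e i =
      -(∑ j, (S e j)ᵀ *ᵥ σ e i j)
      + ∑ m ∈ Me e, (P m e)ᵀ *ᵥ (W m *ᵥ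
          (if e ∈ Eminus m then Tstar m i else -(Tstar m i)))) :
    ∀ i, ∑ e, oneE e ⬝ᵥ (Mρ e *ᵥ dv e i) = 0 := by
  intro i
  have key : ∀ e (x : Fin (n e) → ℝ) (A : Matrix (Fin (n e)) (Fin (n e)) ℝ),
      True := fun _ _ _ => trivial
  have h1 : ∀ e, oneE e ⬝ᵥ (Mρ e *ᵥ dv e i) =
      ∑ m ∈ Me e, (P m e *ᵥ oneE e) ⬝ᵥ (W m *ᵥ
        (if e ∈ Eminus m then Tstar m i else -(Tstar m i))) := by
    intro e
    rw [hscheme e i, dotProduct_add, dotProduct_neg, dot_sum_right, dot_sum_right]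
    have hz : ∀ j : Fin 3, oneE e ⬝ᵥ ((S e j)ᵀ *ᵥ σ e i j) = 0 := by
      intro j
      rw [dotProduct_mulVec, vecMul_transpose, hstiff, zero_dotProduct]
    simp only [hz, Finset.sum_const_zero, neg_zero, zero_add]
    refine Finset.sum_congr rfl fun m _ => ?_
    rw [dotProduct_mulVec, vecMul_transpose]
  simp only [h1]
  rw [Finset.sum_comm' (s' := fun m => Eminus m ∪ Eplus m) (t' := Finset.univ)]
  · refine Finset.sum_eq_zero fun m _ => ?_
    rw [Finset.sum_union (hdisj m)]
    have hA : ∑ e ∈ Eminus m, (P m e *ᵥ oneE e) ⬝ᵥ (W m *ᵥ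
        (if e ∈ Eminus m then Tstar m i else -(Tstar m i))) =
        oneM m ⬝ᵥ (W m *ᵥ Tstar m i) := by
      rw [Finset.sum_congr rfl fun e he =>
        (by rw [if_pos he] : P m e *ᵥ oneE e ⬝ᵥ W m *ᵥ (if e ∈ Eminus m then Tstar m i else -Tstar m i)
          = P m e *ᵥ oneE e ⬝ᵥ W m *ᵥ Tstar m i),
        ← dot_sum_left, (hproj m).1]
    have hB : ∑ e ∈ Eplus m, (P m e *ᵥ oneE e) ⬝ᵥ (W m *ᵥ
        (if e ∈ Eminus m then Tstar m i else -(Tstar m i))) =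
        -(oneM m ⬝ᵥ (W m *ᵥ Tstar m i)) := by
      rw [Finset.sum_congr rfl fun e he =>
        (by rw [if_neg (Finset.disjoint_right.mp (hdisj m) he), mulVec_neg, dotProduct_neg] :
          P m e *ᵥ oneE e ⬝ᵥ W m *ᵥ (if e ∈ Eminus m then Tstar m i else -Tstar m i)
          = -(P m e *ᵥ oneE e ⬝ᵥ W m *ᵥ Tstar m i)),
        Finset.sum_neg_distrib, ← dot_sum_left, (hproj m).2]
    rw [hA, hB, add_neg_cancel]
  · intro e m
    simp [hMe, Finset.mem_union]
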